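/- Let d ≥ 3 and fix 0 < ε < 1 < M and an integer m ≥ 1. ℙ-almost surely, for all n large enough: for every x ∈ 𝔻(n), the number of sites of ℬ(n) in the cube B_x(ι(n)) of side ι(n) centered at x is at most n² ν(n)^d g(n)^{−2α} r(n)^d. -/

import Mathlib

open MeasureTheory ProbabilityTheory Filter Set
open scoped ENNReal NNReal

/-- Euclidean norm of a point of `ℤ^d`. -/
noncomputable def znorm {d : ℕ} (x : Fin d → ℤ) : ℝ :=
  Real.sqrt (∑ i, ((x i : ℝ)) ^ 2)

/-- The unit step of the simple random walk indexed by a coordinate and a sign. -/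
def stepVec (d : ℕ) (p : Fin d × Bool) : Fin d → ℤ :=
  fun j => if j = p.1 then (if p.2 then 1 else -1) else 0

/-- `Y` is a simple random walk on `ℤ^d` started at `0` under `P`. -/
structure IsSRW {Ω : Type*} [MeasurableSpace Ω] (P : Measure Ω) (d : ℕ)
    (Y : ℕ → Ω → (Fin d → ℤ)) : Prop where
  meas : ∀ k, Measurable (Y k)
  init : ∀ ω, Y 0 ω = 0
  indep : iIndepFun (fun k ω => Y (k + 1) ω - Y k ω) P
  step : ∀ k p, P {ω | Y (k + 1) ω - Y k ω = stepVec d p} = (2 * d : ℝ≥0∞)⁻¹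

/-- i.i.d. heavy-tailed random environment on `ℤ^d`. -/
structure IsEnv {Ω : Type*} [MeasurableSpace Ω] (P : Measure Ω) (d : ℕ) (α : ℝ)
    (L : ℝ → ℝ) (τ : (Fin d → ℤ) → Ω → ℝ) : Prop where
  meas : ∀ x, Measurable (τ x)
  pos : ∀ x ω, 0 < τ x ω
  indep : iIndepFun τ P
  tail : ∀ x u, (1 : ℝ) ≤ u → P {ω | u ≤ τ x ω} = ENNReal.ofReal (u ^ (-α) * (1 + L u))
  decay : Tendsto L atTop (nhds 0)

noncomputable def gscale (α : ℝ) (n : ℕ) : ℝ := (2 : ℝ) ^ ((n : ℝ) / α)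
noncomputable def rscale (n : ℕ) : ℝ := (2 : ℝ) ^ ((n : ℝ) / 2)
noncomputable def rhoscale (d n : ℕ) : ℝ := (2 : ℝ) ^ ((1 - 1 / (3 * (d : ℝ))) * n / 2)
noncomputable def nuscale (d n : ℕ) : ℝ := (2 : ℝ) ^ ((1 / (d : ℝ)) * n / 2)
noncomputable def iotascale (d n : ℕ) : ℝ := (2 : ℝ) ^ ((1 - 2 / (3 * (d : ℝ))) * n / 2)
noncomputable def hscale (d n : ℕ) : ℝ := rscale n / rhoscale d n

/-- the big ball `𝔻(n)` of radius `m · r(n)`. -/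
def bigD (d m n : ℕ) : Set (Fin d → ℤ) := {x | znorm x ≤ m * rscale n}

/-- the cube of side `ℓ` centered at `x`. -/
def cube {d : ℕ} (x : Fin d → ℤ) (ℓ : ℝ) : Set (Fin d → ℤ) :=
  {y | ∀ i, |((y i : ℝ)) - ((x i : ℝ))| ≤ ℓ / 2}

/-- the set of deep traps `T_ε^M(n)`. -/
noncomputable def traps {Ω : Type*} {d : ℕ} (τ : (Fin d → ℤ) → Ω → ℝ) (α : ℝ) (m : ℕ)
    (ε M : ℝ) (n : ℕ) (ω : Ω) : Set (Fin d → ℤ) :=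
  {x ∈ bigD d m n | ε * gscale α n ≤ τ x ω ∧ τ x ω < M * gscale α n}

/-- the set `ℰ(n)` of sites far from all deep traps. -/
noncomputable def calE {Ω : Type*} {d : ℕ} (τ : (Fin d → ℤ) → Ω → ℝ) (α : ℝ) (m : ℕ)
    (ε M : ℝ) (n : ℕ) (ω : Ω) : Set (Fin d → ℤ) :=
  {x ∈ bigD d m n | ∀ y ∈ traps τ α m ε M n ω, nuscale d n < znorm (x - y)}

/-- the set `ℰ₀(n)` of sites of `ℰ(n)` far from the boundary of `𝔻(n)`. -/
noncomputable def calE₀ {Ω : Type*} {d : ℕ} (τ : (Fin d → ℤ) → Ω → ℝ) (α : ℝ) (m : ℕ)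
    (ε M : ℝ) (n : ℕ) (ω : Ω) : Set (Fin d → ℤ) :=
  {x ∈ calE τ α m ε M n ω | ∀ y, y ∉ bigD d m n → rhoscale d n < znorm (x - y)}


/-- the set `ℬ(n)` of bad traps: traps with another trap within distance `ν(n)`. -/
noncomputable def badTraps {Ω : Type*} {d : ℕ} (τ : (Fin d → ℤ) → Ω → ℝ) (α : ℝ) (m : ℕ)
    (ε M : ℝ) (n : ℕ) (ω : Ω) : Set (Fin d → ℤ) :=
  {x ∈ traps τ α m ε M n ω |
    ∃ y ∈ traps τ α m ε M n ω, y ≠ x ∧ znorm (x - y) ≤ nuscale d n}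

section Aux
variable {d : ℕ}

lemma abs_coord_le_znorm (x : Fin d → ℤ) (i : Fin d) : |((x i : ℝ))| ≤ znorm x := by
  rw [znorm, ← Real.sqrt_sq_eq_abs]
  exact Real.sqrt_le_sqrt (Finset.single_le_sum (f := fun j => ((x j : ℝ)) ^ 2)
    (fun j _ => sq_nonneg _) (Finset.mem_univ i))

/-- the lattice box of "radius" `b`. -/
noncomputable def latbox (d : ℕ) (b : ℤ) : Finset (Fin d → ℤ) :=
  Fintype.piFinset fun _ => Finset.Icc (-b) b

lemma mem_latbox_of_znorm {B : ℝ} {x : Fin d → ℤ} (h : znorm x ≤ B) : x ∈ latbox d ⌊B⌋ := by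
  rw [latbox, Fintype.mem_piFinset]
  intro i
  have h1 : |((x i : ℝ))| ≤ B := (abs_coord_le_znorm x i).trans h
  rw [abs_le] at h1
  rw [Finset.mem_Icc]
  constructor
  · have : (-x i : ℤ) ≤ ⌊B⌋ := Int.le_floor.mpr (by push_cast; linarith [h1.1])
    omega
  · exact Int.le_floor.mpr h1.2

lemma latbox_card_le {B : ℝ} (hB : 1 ≤ B) : (((latbox d ⌊B⌋).card : ℝ)) ≤ (3 * B) ^ d := by
  have hfl : (0 : ℤ) ≤ ⌊B⌋ := Int.le_floor.mpr (by exact_mod_cast zero_le_one.trans hB)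
  have hcard : (latbox d ⌊B⌋).card = ((2 * ⌊B⌋ + 1).toNat) ^ d := by
    rw [latbox, Fintype.card_piFinset]
    simp [Int.card_Icc]
    congr 1
    omega
  rw [hcard]
  push_cast
  have h1 : (((2 * ⌊B⌋ + 1).toNat : ℝ)) ≤ 3 * B := by
    have h2 : ((2 * ⌊B⌋ + 1).toNat : ℤ) = 2 * ⌊B⌋ + 1 := by omega
    have h3 : (((2 * ⌊B⌋ + 1).toNat : ℤ) : ℝ) ≤ 3 * B := by
      rw [h2]; push_cast; have := Int.floor_le B; linarith
    exact_mod_cast h3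
  exact pow_le_pow_left₀ (by positivity) h1 d



section Meas
variable {Ω : Type*} [MeasurableSpace Ω] {d : ℕ}

lemma meas_trapsEvent {τ : (Fin d → ℤ) → Ω → ℝ} (hm : ∀ x, Measurable (τ x))
    (α : ℝ) (m : ℕ) (ε M : ℝ) (n : ℕ) (x : Fin d → ℤ) :
    MeasurableSet {ω | x ∈ traps τ α m ε M n ω} := by
  have h : {ω | x ∈ traps τ α m ε M n ω}
      = {ω : Ω | x ∈ bigD d m n} ∩ τ x ⁻¹' (Set.Ico (ε * gscale α n) (M * gscale α n)) := by
    ext ω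
    simp only [traps, Set.mem_setOf_eq, Set.mem_sep_iff, Set.mem_inter_iff, Set.mem_preimage,
      Set.mem_Ico]
  rw [h]
  exact (MeasurableSet.const _).inter ((hm x) measurableSet_Ico)

lemma meas_badEvent {τ : (Fin d → ℤ) → Ω → ℝ} (hm : ∀ x, Measurable (τ x))
    (α : ℝ) (m : ℕ) (ε M : ℝ) (n : ℕ) (x : Fin d → ℤ) :
    MeasurableSet {ω | x ∈ badTraps τ α m ε M n ω} := by
  have h : {ω | x ∈ badTraps τ α m ε M n ω}
      = {ω | x ∈ traps τ α m ε M n ω} ∩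
        ⋃ y : Fin d → ℤ, ({ω | y ∈ traps τ α m ε M n ω} ∩
          {_ω : Ω | y ≠ x ∧ znorm (x - y) ≤ nuscale d n}) := by
    ext ω
    simp only [badTraps, Set.mem_setOf_eq, Set.mem_sep_iff, Set.mem_inter_iff, Set.mem_iUnion]
  rw [h]
  exact (meas_trapsEvent hm α m ε M n x).inter
    (MeasurableSet.iUnion fun y => (meas_trapsEvent hm α m ε M n y).inter (MeasurableSet.const _))

end Meas

lemma one_le_two_rpow {x : ℝ} (hx : 0 ≤ x) : (1 : ℝ) ≤ (2 : ℝ) ^ x := by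
  rw [← Real.rpow_zero 2]
  exact Real.rpow_le_rpow_of_exponent_le one_le_two hx

theorem stmt_7 {Ω : Type*} [MeasurableSpace Ω] (P : Measure Ω) [IsProbabilityMeasure P]
    (d : ℕ) (hd : 3 ≤ d) (α : ℝ) (hα : α ∈ Set.Ioo (0 : ℝ) 1) (L : ℝ → ℝ)
    (τ : (Fin d → ℤ) → Ω → ℝ) (hτ : IsEnv P d α L τ)
    (ε M : ℝ) (hε : 0 < ε) (hε1 : ε < 1) (hM : 1 < M) (m : ℕ) (hm : 1 ≤ m) :
    ∀ᵐ ω ∂P, ∃ n₀ : ℕ, ∀ n ≥ n₀, ∀ x ∈ bigD d m n,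
      ((badTraps τ α m ε M n ω ∩ cube x (iotascale d n)).ncard : ℝ)
        ≤ (n : ℝ) ^ 2 * nuscale d n ^ (d : ℝ) * gscale α n ^ (-(2 * α)) * rscale n ^ (d : ℝ) := by
  classical
  obtain ⟨hα0, hα1⟩ := hα
  have hg : ∀ n : ℕ, (0 : ℝ) < gscale α n := fun n => Real.rpow_pos_of_pos two_pos _
  have hr1 : ∀ n : ℕ, (1 : ℝ) ≤ rscale n := fun n => one_le_two_rpow (by positivity)
  have hν1 : ∀ n : ℕ, (1 : ℝ) ≤ nuscale d n := fun n => one_le_two_rpow (by positivity)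
  set u : ℕ → ℝ := fun n => ε * gscale α n with hu_def
  -- `u n → ∞`
  have hu_tendsto : Tendsto u atTop atTop := by
    have h1 : Tendsto (fun n : ℕ => (n : ℝ) / α) atTop atTop :=
      tendsto_natCast_atTop_atTop.atTop_div_const hα0
    have h2 : Tendsto (fun x : ℝ => (2 : ℝ) ^ x) atTop atTop := by
      simp_rw [Real.rpow_def_of_pos two_pos]
      exact Real.tendsto_exp_atTop.comp
        (Tendsto.const_mul_atTop (Real.log_pos one_lt_two) tendsto_id)
    have h3 : Tendsto (fun n : ℕ => gscale α n) atTop atTop := by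
      have := h2.comp h1
      exact this
    exact Tendsto.const_mul_atTop hε h3
  have hL1 : ∀ᶠ v in atTop, L v ≤ 1 :=
    hτ.decay.eventually_le_const (by norm_num : (0:ℝ) < 1)
  obtain ⟨n₁, hn₁⟩ := eventually_atTop.mp
    ((hu_tendsto.eventually hL1).and (hu_tendsto.eventually_ge_atTop 1))
  -- the threshold
  set K : ℕ → ℝ := fun n =>
    (n : ℝ) ^ 2 * nuscale d n ^ (d : ℝ) * gscale α n ^ (-(2 * α)) * rscale n ^ (d : ℝ)
    with hK_def
  set C : ℝ := 4 * 9 ^ d * (m : ℝ) ^ d * ε ^ (-(2 * α)) with hC_def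
  have hC0 : 0 ≤ C := by rw [hC_def]; positivity
  -- the key per-`n` estimate
  have key : ∀ n, n₁ ≤ n → 1 ≤ n →
      P {ω | ¬ ((badTraps τ α m ε M n ω).ncard : ℝ) ≤ K n}
        ≤ ENNReal.ofReal (C / (n : ℝ) ^ 2) := by
    intro n hn hn1
    obtain ⟨hLu, hu1⟩ := hn₁ n hn
    have hn0 : (0 : ℝ) < (n : ℝ) := by exact_mod_cast hn1
    have hu0 : (0 : ℝ) < u n := lt_of_lt_of_le one_pos hu1
    set Dbox : Finset (Fin d → ℤ) := latbox d ⌊(m : ℝ) * rscale n⌋ with hDbox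
    set bbox : Finset (Fin d → ℤ) := latbox d ⌊nuscale d n⌋ with hbbox
    set T : (Fin d → ℤ) → Set Ω := fun x => τ x ⁻¹' Set.Ici (u n) with hT_def
    set pq : ℝ≥0∞ := ENNReal.ofReal ((u n) ^ (-α) * (1 + L (u n))) with hpq
    have hT : ∀ x, P (T x) = pq := by
      intro x
      have h1 : T x = {ω | u n ≤ τ x ω} := by ext ω; simp [hT_def]
      rw [h1, hτ.tail x (u n) hu1, hpq]
    set E : (Fin d → ℤ) → Set Ω := fun x => {ω | x ∈ badTraps τ α m ε M n ω} with hE_def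
    have hEmeas : ∀ x, MeasurableSet (E x) := fun x => meas_badEvent hτ.meas α m ε M n x
    -- union bound over pairs of nearby traps
    have hEbound : ∀ x, P (E x) ≤ (bbox.card : ℝ≥0∞) * (pq * pq) := by
      intro x
      have hEsub : E x ⊆ ⋃ y ∈ (bbox.image (fun z => x - z)).erase x, T x ∩ T y := by
        intro ω hω
        obtain ⟨hx, y, hy, hyx, hdist⟩ := hω
        refine Set.mem_iUnion₂.mpr ⟨y, Finset.mem_erase.mpr ⟨hyx, Finset.mem_image.mpr
          ⟨x - y, mem_latbox_of_znorm hdist, sub_sub_cancel x y⟩⟩, ?_⟩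
        exact ⟨hx.2.1, hy.2.1⟩
      calc P (E x) ≤ P (⋃ y ∈ (bbox.image (fun z => x - z)).erase x, T x ∩ T y) :=
            measure_mono hEsub
        _ ≤ ∑ y ∈ (bbox.image (fun z => x - z)).erase x, P (T x ∩ T y) :=
            measure_biUnion_finset_le _ _
        _ = ∑ _y ∈ (bbox.image (fun z => x - z)).erase x, (pq * pq) := by
            refine Finset.sum_congr rfl fun y hy => ?_
            have hxy : x ≠ y := (Finset.ne_of_mem_erase hy).symm
            have hind := (hτ.indep.indepFun hxy).measure_inter_preimage_eq_mul
              (Set.Ici (u n)) (Set.Ici (u n)) measurableSet_Ici measurableSet_Ici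
            calc P (T x ∩ T y) = P (T x) * P (T y) := hind
              _ = pq * pq := by rw [hT x, hT y]
        _ = ((bbox.image (fun z => x - z)).erase x).card • (pq * pq) := Finset.sum_const _
        _ = (((bbox.image (fun z => x - z)).erase x).card : ℝ≥0∞) * (pq * pq) := nsmul_eq_mul _ _
        _ ≤ (bbox.card : ℝ≥0∞) * (pq * pq) := by
            refine mul_le_mul_left ?_ _
            exact_mod_cast Finset.card_erase_le.trans Finset.card_image_le
    set f : Ω → ℝ≥0∞ := fun ω => ∑ x ∈ Dbox, (E x).indicator 1 ω with hf_def
    have hfmeas : Measurable f :=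
      Finset.measurable_sum _ fun x _ => measurable_const.indicator (hEmeas x)
    have hNle : ∀ ω', ((badTraps τ α m ε M n ω').ncard : ℝ≥0∞) ≤ f ω' := by
      intro ω'
      set S := badTraps τ α m ε M n ω' with hS
      have hsub : S ⊆ ↑Dbox := fun z hz => mem_latbox_of_znorm hz.1.1
      have hSeq : S = ↑(Dbox.filter (· ∈ S)) := by
        ext z
        simp only [Finset.coe_filter, Set.mem_setOf_eq]
        exact ⟨fun h => ⟨hsub h, h⟩, fun h => h.2⟩
      rw [hSeq, Set.ncard_coe_finset, Finset.card_filter]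
      rw [hf_def]
      push_cast
      refine le_of_eq (Finset.sum_congr rfl fun x _ => ?_)
      by_cases hmem : x ∈ S
      · simp [Set.indicator_apply, show ω' ∈ E x from hmem, hmem]
      · simp [Set.indicator_apply, show ω' ∉ E x from hmem, hmem]
    have hν0 : (0 : ℝ) < nuscale d n := lt_of_lt_of_le one_pos (hν1 n)
    have hr0 : (0 : ℝ) < rscale n := lt_of_lt_of_le one_pos (hr1 n)
    have hK0 : 0 < K n := by
      rw [hK_def]
      exact mul_pos (mul_pos (mul_pos (pow_pos hn0 2) (Real.rpow_pos_of_pos hν0 _))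
        (Real.rpow_pos_of_pos (hg n) _)) (Real.rpow_pos_of_pos hr0 _)
    have hsub2 : {ω | ¬ ((badTraps τ α m ε M n ω).ncard : ℝ) ≤ K n}
        ⊆ {ω | ENNReal.ofReal (K n) ≤ f ω} := by
      intro ω hω
      have h1 : K n < ((badTraps τ α m ε M n ω).ncard : ℝ) := not_le.mp hω
      have h2 : ENNReal.ofReal (K n) ≤ ((badTraps τ α m ε M n ω).ncard : ℝ≥0∞) := by
        rw [← ENNReal.ofReal_natCast]
        exact ENNReal.ofReal_le_ofReal h1.le
      exact h2.trans (hNle ω)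
    have hmarkov := meas_ge_le_lintegral_div (μ := P) hfmeas.aemeasurable
      (ε := ENNReal.ofReal (K n)) (by simp [ENNReal.ofReal_eq_zero, not_le, hK0])
      ENNReal.ofReal_ne_top
    have hint : (∫⁻ ω, f ω ∂P) = ∑ x ∈ Dbox, P (E x) := by
      have hfb : (∫⁻ ω, f ω ∂P) = ∫⁻ ω, ∑ x ∈ Dbox, (E x).indicator 1 ω ∂P := rfl
      rw [hfb, lintegral_finset_sum (f := fun x => (E x).indicator 1) Dbox
        (fun x _ => measurable_const.indicator (hEmeas x))]
      exact Finset.sum_congr rfl fun x _ => lintegral_indicator_one (hEmeas x)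
    have huα : (0 : ℝ) ≤ (u n) ^ (-α) := Real.rpow_nonneg hu0.le _
    have hq : pq ≤ ENNReal.ofReal (2 * (u n) ^ (-α)) := by
      apply ENNReal.ofReal_le_ofReal
      have h1 : 1 + L (u n) ≤ 2 := by linarith
      nlinarith
    have hm1 : (1 : ℝ) ≤ (m : ℝ) * rscale n := by
      have h1 : (1 : ℝ) ≤ (m : ℝ) := by exact_mod_cast hm
      nlinarith [hr1 n]
    have hDcard : ((Dbox.card : ℝ≥0∞)) ≤ ENNReal.ofReal ((3 * ((m : ℝ) * rscale n)) ^ d) := by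
      rw [← ENNReal.ofReal_natCast]
      exact ENNReal.ofReal_le_ofReal (latbox_card_le hm1)
    have hbcard : ((bbox.card : ℝ≥0∞)) ≤ ENNReal.ofReal ((3 * nuscale d n) ^ d) := by
      rw [← ENNReal.ofReal_natCast]
      exact ENNReal.ofReal_le_ofReal (latbox_card_le (hν1 n))
    have hq0 : (0 : ℝ) ≤ 2 * (u n) ^ (-α) := mul_nonneg (by norm_num) huα
    have hfint : (∫⁻ ω, f ω ∂P) ≤ ENNReal.ofReal ((3 * ((m : ℝ) * rscale n)) ^ d *
        ((3 * nuscale d n) ^ d * ((2 * (u n) ^ (-α)) * (2 * (u n) ^ (-α))))) := by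
      rw [hint]
      calc ∑ x ∈ Dbox, P (E x) ≤ ∑ _x ∈ Dbox, ((bbox.card : ℝ≥0∞) * (pq * pq)) :=
            Finset.sum_le_sum fun x _ => hEbound x
        _ = (Dbox.card : ℝ≥0∞) * ((bbox.card : ℝ≥0∞) * (pq * pq)) := by
            rw [Finset.sum_const, nsmul_eq_mul]
        _ ≤ ENNReal.ofReal ((3 * ((m : ℝ) * rscale n)) ^ d) *
            (ENNReal.ofReal ((3 * nuscale d n) ^ d) *
              (ENNReal.ofReal (2 * (u n) ^ (-α)) * ENNReal.ofReal (2 * (u n) ^ (-α)))) :=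
            mul_le_mul' hDcard (mul_le_mul' hbcard (mul_le_mul' hq hq))
        _ = _ := by
            rw [← ENNReal.ofReal_mul hq0, ← ENNReal.ofReal_mul (by positivity),
              ← ENNReal.ofReal_mul (by positivity)]
    have hreal : (3 * ((m : ℝ) * rscale n)) ^ d *
        ((3 * nuscale d n) ^ d * ((2 * (u n) ^ (-α)) * (2 * (u n) ^ (-α))))
          ≤ C / (n : ℝ) ^ 2 * K n := by
      apply le_of_eq
      have e1 : (2 * (u n) ^ (-α)) * (2 * (u n) ^ (-α))
          = 4 * (ε ^ (-(2 * α)) * gscale α n ^ (-(2 * α))) := by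
        have h1 : (u n) ^ (-α) = ε ^ (-α) * gscale α n ^ (-α) :=
          Real.mul_rpow hε.le (hg n).le
        rw [h1, show -(2 * α) = -α + -α by ring, Real.rpow_add hε, Real.rpow_add (hg n)]
        ring
      rw [e1, hK_def, hC_def]
      beta_reduce
      rw [show nuscale d n ^ (d : ℝ) = nuscale d n ^ d from Real.rpow_natCast _ d,
        show rscale n ^ (d : ℝ) = rscale n ^ d from Real.rpow_natCast _ d]
      have h9 : (9 : ℝ) ^ d = (3 ^ d) ^ 2 := by
        rw [← pow_mul, show d * 2 = 2 * d from Nat.mul_comm d 2, pow_mul]; norm_num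
      field_simp
      rw [h9]
      ring
    calc P {ω | ¬ ((badTraps τ α m ε M n ω).ncard : ℝ) ≤ K n}
        ≤ P {ω | ENNReal.ofReal (K n) ≤ f ω} := measure_mono hsub2
      _ ≤ (∫⁻ ω, f ω ∂P) / ENNReal.ofReal (K n) := hmarkov
      _ ≤ ENNReal.ofReal (C / (n : ℝ) ^ 2) := by
          apply ENNReal.div_le_of_le_mul
          refine hfint.trans ?_
          rw [← ENNReal.ofReal_mul (div_nonneg hC0 (by positivity))]
          exact ENNReal.ofReal_le_ofReal hreal
  -- Borel–Cantelli
  set N₀ : ℕ := max n₁ 1 with hN₀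
  set s : ℕ → Set Ω := fun k =>
    {ω | ¬ ((badTraps τ α m ε M (k + N₀) ω).ncard : ℝ) ≤ K (k + N₀)} with hs_def
  have hsbound : ∀ k, P (s k) ≤ ENNReal.ofReal (C / ((k : ℝ) + 1) ^ 2) := by
    intro k
    refine (key (k + N₀) (le_trans (le_max_left _ _) (Nat.le_add_left _ _))
      (le_trans (le_max_right _ _) (Nat.le_add_left _ _))).trans ?_
    apply ENNReal.ofReal_le_ofReal
    have hk1 : ((k : ℝ) + 1) ≤ ((k + N₀ : ℕ) : ℝ) := by
      push_cast
      have : (1 : ℝ) ≤ (N₀ : ℝ) := by exact_mod_cast le_max_right n₁ 1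
      linarith
    have hp : ((k : ℝ) + 1) ^ 2 ≤ ((k + N₀ : ℕ) : ℝ) ^ 2 := by
      apply pow_le_pow_left₀ (by positivity) hk1
    exact div_le_div_of_nonneg_left hC0 (by positivity) hp
  have hsummable : Summable (fun k : ℕ => C / ((k : ℝ) + 1) ^ 2) := by
    have h0 : Summable (fun n : ℕ => 1 / (n : ℝ) ^ 2) :=
      Real.summable_one_div_nat_pow.mpr one_lt_two
    have h1 : Summable (fun k : ℕ => 1 / ((k : ℝ) + 1) ^ 2) := by
      have := (summable_nat_add_iff 1).mpr h0
      simpa using this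
    have h2 := h1.mul_left C
    simpa [div_eq_mul_inv, mul_assoc] using h2
  have hsum : (∑' k, P (s k)) ≠ ⊤ := by
    have h1 : (∑' k, P (s k)) ≤ ∑' k : ℕ, ENNReal.ofReal (C / ((k : ℝ) + 1) ^ 2) :=
      ENNReal.tsum_le_tsum hsbound
    have h2 : (∑' k : ℕ, ENNReal.ofReal (C / ((k : ℝ) + 1) ^ 2))
        = ENNReal.ofReal (∑' k : ℕ, C / ((k : ℝ) + 1) ^ 2) :=
      (ENNReal.ofReal_tsum_of_nonneg (fun k => by positivity) hsummable).symm
    rw [h2] at h1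
    exact (h1.trans_lt ENNReal.ofReal_lt_top).ne
  filter_upwards [MeasureTheory.ae_eventually_notMem hsum] with ω hω
  obtain ⟨k₀, hk₀⟩ := eventually_atTop.mp hω
  refine ⟨k₀ + N₀, fun n hn x _hx => ?_⟩
  have hnN : N₀ ≤ n := le_trans (Nat.le_add_left _ _) hn
  have h1 : ω ∉ s (n - N₀) := hk₀ (n - N₀) (by omega)
  rw [hs_def] at h1
  simp only [Set.mem_setOf_eq, not_not] at h1
  rw [Nat.sub_add_cancel hnN] at h1
  -- finiteness of the set of bad traps
  have hbadsub : badTraps τ α m ε M n ω ⊆ ↑(latbox d ⌊(m : ℝ) * rscale n⌋) := by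
    intro z hz
    have hz1 : z ∈ bigD d m n := hz.1.1
    exact mem_latbox_of_znorm hz1
  have hfin : (badTraps τ α m ε M n ω).Finite :=
    Set.Finite.subset (latbox d ⌊(m : ℝ) * rscale n⌋).finite_toSet hbadsub
  have hmono : (badTraps τ α m ε M n ω ∩ cube x (iotascale d n)).ncard
      ≤ (badTraps τ α m ε M n ω).ncard :=
    Set.ncard_le_ncard Set.inter_subset_left hfin
  calc ((badTraps τ α m ε M n ω ∩ cube x (iotascale d n)).ncard : ℝ)
      ≤ ((badTraps τ α m ε M n ω).ncard : ℝ) := by exact_mod_cast hmono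
    _ ≤ K n := h1
    _ = _ := by rw [hK_def]
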